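/- Let β₁, β₂ > 1 be distinct real roots of a polynomial P with coefficients in {−1, 0, 1} and nonzero leading coefficient. Then there exist two distinct sequences (a_n), (b_n) ∈ {−1,1}^ℕ with a_1 ≠ b_1 such that Σ a_n β_i^{−n} = Σ b_n β_i^{−n} for both i = 1 and i = 2. -/

import Mathlib

lemma summ_aux (β : ℝ) (hβ : 1 < β) (f : ℕ → ℝ) (hf : ∀ j, |f j| ≤ 1) :
    Summable fun j : ℕ => f j / β ^ (j + 1) := by
  have hβ0 : (0:ℝ) < β := lt_trans one_pos hβ
  have hx0 : (0:ℝ) ≤ 1/β := by positivity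
  have hx1 : (1/β : ℝ) < 1 := by
    rw [div_lt_one hβ0]; exact hβ
  have hg : Summable fun j : ℕ => (1/β) * (1/β) ^ j :=
    (summable_geometric_of_lt_one hx0 hx1).mul_left _
  refine Summable.of_norm (Summable.of_nonneg_of_le (fun j => norm_nonneg _) (fun j => ?_) hg)
  have hpow : (0:ℝ) < β ^ (j+1) := by positivity
  rw [Real.norm_eq_abs, abs_div, abs_of_pos hpow, div_le_iff₀ hpow]
  calc |f j| ≤ 1 := hf j
    _ = 1/β * (1/β)^j * β^(j+1) := by
        field_simp [pow_succ]
        rw [one_div, inv_pow, pow_succ, ← mul_assoc, inv_mul_cancel₀ (by positivity), one_mul]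
    _ = _ := rfl

lemma key_aux (β : ℝ) (hβ : 1 < β) (n : ℕ) (c : ℕ → ℝ)
    (hc : ∀ i ≤ n, |c i| ≤ 1)
    (hP : ∑ i ∈ Finset.range (n + 1), c i * β ^ i = 0) :
    ∑' j : ℕ, c (n - j % (n + 1)) / β ^ (j + 1) = 0 := by
  have hβ0 : (0:ℝ) < β := lt_trans one_pos hβ
  set f : ℕ → ℝ := fun j => c (n - j % (n + 1)) / β ^ (j + 1) with hf
  have hsum : Summable f :=
    summ_aux β hβ _ (fun j => hc _ (Nat.sub_le _ _))
  -- the one-period sum is zero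
  have hS : ∑ r ∈ Finset.range (n + 1), c (n - r) / β ^ (r + 1) = 0 := by
    have h1 : ∑ r ∈ Finset.range (n + 1), c (n - r) / β ^ (r + 1)
        = ∑ i ∈ Finset.range (n + 1), c i / β ^ (n + 1 - i) := by
      rw [← Finset.sum_range_reflect (fun i => c i / β ^ (n + 1 - i)) (n + 1)]
      refine Finset.sum_congr rfl (fun r hr => ?_)
      have hr' := Finset.mem_range.mp hr
      congr 2 <;> omega
    have h2 : ∀ i ∈ Finset.range (n+1), c i / β ^ (n + 1 - i) = (c i * β ^ i) / β ^ (n+1) := by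
      intro i hi
      have hi' := Finset.mem_range.mp hi
      rw [div_eq_div_iff (by positivity) (by positivity)]
      rw [mul_assoc, ← pow_add]
      congr 2
      omega
    rw [h1, Finset.sum_congr rfl h2, ← Finset.sum_div, hP, zero_div]
  have e := (Nat.divModEquiv (n + 1))
  rw [← (Nat.divModEquiv (n + 1)).symm.tsum_eq f]
  have hsum' : Summable (f ∘ (Nat.divModEquiv (n + 1)).symm) :=
    (Equiv.summable_iff _).mpr hsum
  rw [show (fun p => f ((Nat.divModEquiv (n+1)).symm p)) = f ∘ (Nat.divModEquiv (n+1)).symm from rfl]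
  rw [Summable.tsum_prod hsum']
  have hinner : ∀ q : ℕ, ∑' r : Fin (n+1), (f ∘ (Nat.divModEquiv (n+1)).symm) (q, r) = 0 := by
    intro q
    rw [tsum_fintype]
    have : ∀ r : Fin (n+1), (f ∘ (Nat.divModEquiv (n+1)).symm) (q, r)
        = (1/β^((n+1)*q)) * (c (n - (r:ℕ)) / β ^ ((r:ℕ) + 1)) := by
      intro r
      simp only [Function.comp, Nat.divModEquiv_symm_apply, hf]
      have hmod : (q * (n+1) + (r:ℕ)) % (n+1) = (r:ℕ) := by
        rw [Nat.add_comm, Nat.add_mul_mod_self_right]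
        exact Nat.mod_eq_of_lt r.is_lt
      rw [hmod]
      rw [div_mul_eq_mul_div, one_mul, div_div, ← pow_add]
      congr 2
      ring
    rw [Finset.sum_congr rfl (fun r _ => this r), ← Finset.mul_sum]
    rw [Fin.sum_univ_eq_sum_range (fun r => c (n - r) / β ^ (r + 1)) (n+1), hS, mul_zero]
  simp only [hinner, tsum_zero]

theorem two_addresses_of_pm_zero (b1 b2 : ℝ) (hb1 : 1 < b1) (hb2 : 1 < b2)
    (hne : b1 ≠ b2) (n : ℕ) (c : ℕ → ℝ)
    (hc : ∀ i ≤ n, c i = -1 ∨ c i = 0 ∨ c i = 1)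
    (hcn : c n ≠ 0)
    (hP1 : ∑ i ∈ Finset.range (n + 1), c i * b1 ^ i = 0)
    (hP2 : ∑ i ∈ Finset.range (n + 1), c i * b2 ^ i = 0) :
    ∃ a b : ℕ → ℝ,
      (∀ j : ℕ, a j = -1 ∨ a j = 1) ∧
      (∀ j : ℕ, b j = -1 ∨ b j = 1) ∧
      a 1 ≠ b 1 ∧
      (∑' j : ℕ, a (j + 1) / b1 ^ (j + 1)) = (∑' j : ℕ, b (j + 1) / b1 ^ (j + 1)) ∧
      (∑' j : ℕ, a (j + 1) / b2 ^ (j + 1)) = (∑' j : ℕ, b (j + 1) / b2 ^ (j + 1)) := by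
  have hc1 : ∀ i ≤ n, |c i| ≤ 1 := by
    intro i hi; rcases hc i hi with h|h|h <;> rw [h] <;> norm_num
  set a : ℕ → ℝ := fun j => if c (n - (j - 1) % (n + 1)) = -1 then -1 else 1 with ha
  set b : ℕ → ℝ := fun j => if c (n - (j - 1) % (n + 1)) = 1 then -1 else 1 with hb
  have haj : ∀ j : ℕ, a j = -1 ∨ a j = 1 := by
    intro j; simp only [ha]; split <;> simp
  have hbj : ∀ j : ℕ, b j = -1 ∨ b j = 1 := by
    intro j; simp only [hb]; split <;> simp
  have hab : ∀ j : ℕ, a (j + 1) = b (j + 1) + 2 * c (n - j % (n + 1)) := by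
    intro j
    simp only [ha, hb, Nat.add_sub_cancel]
    rcases hc (n - j % (n + 1)) (Nat.sub_le _ _) with h|h|h <;> rw [h] <;> norm_num
  have key : ∀ β : ℝ, 1 < β → (∑ i ∈ Finset.range (n + 1), c i * β ^ i = 0) →
      (∑' j : ℕ, a (j + 1) / β ^ (j + 1)) = (∑' j : ℕ, b (j + 1) / β ^ (j + 1)) := by
    intro β hβ hP
    have hsb : Summable fun j : ℕ => b (j + 1) / β ^ (j + 1) := by
      refine summ_aux β hβ _ (fun j => ?_)
      rcases hbj (j+1) with h|h <;> rw [h] <;> norm_num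
    have hse : Summable fun j : ℕ => 2 * c (n - j % (n + 1)) / β ^ (j + 1) := by
      have := (summ_aux β hβ (fun j => c (n - j % (n + 1))) (fun j => hc1 _ (Nat.sub_le _ _))).mul_left 2
      refine this.congr (fun j => ?_)
      ring
    calc (∑' j : ℕ, a (j + 1) / β ^ (j + 1))
        = ∑' j : ℕ, (b (j + 1) / β ^ (j + 1) + 2 * c (n - j % (n + 1)) / β ^ (j + 1)) := by
          refine tsum_congr (fun j => ?_)
          rw [hab j, add_div]
      _ = (∑' j : ℕ, b (j + 1) / β ^ (j + 1)) + ∑' j : ℕ, 2 * c (n - j % (n + 1)) / β ^ (j + 1) :=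
          Summable.tsum_add hsb hse
      _ = (∑' j : ℕ, b (j + 1) / β ^ (j + 1)) := by
          have h0 := key_aux β hβ n c hc1 hP
          have : (∑' j : ℕ, 2 * c (n - j % (n + 1)) / β ^ (j + 1))
              = 2 * ∑' j : ℕ, c (n - j % (n + 1)) / β ^ (j + 1) := by
            rw [← tsum_mul_left]
            exact tsum_congr (fun j => by ring)
          rw [this, h0, mul_zero, add_zero]
  refine ⟨a, b, haj, hbj, ?_, key b1 hb1 hP1, key b2 hb2 hP2⟩
  simp only [ha, hb]
  norm_num
  rcases hc n le_rfl with h|h|h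
  · rw [h]; norm_num
  · exact absurd h hcn
  · rw [h]; norm_num
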